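/- For 0 < σ < 4 let p(σ) denote the unique x ∈ (σ/(4−σ), ∞) satisfying e^x = √(16−σ²)/√(16x² − σ²(x+1)²), and set L(σ) = σ·(1+p(σ))·e^{p(σ)}/√(16−σ²). Let ω be the unique positive real number with ω·e^ω = 1. Then lim_{σ→0⁺} L(σ)/σ = (1/4)·(1 + 1/ω). -/

import Mathlib

open Set Filter Real

/-- Monotonicity estimate for `x ↦ x·eˣ` on nonnegative reals. -/
lemma aux_mono_xexp {a b : ℝ} (ha : 0 ≤ a) (hb : 0 ≤ b) :
    |b - a| ≤ |b * Real.exp b - a * Real.exp a| := by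
  rcases le_total a b with h | h
  · have h1 : a * Real.exp a ≤ a * Real.exp b :=
      mul_le_mul_of_nonneg_left (Real.exp_le_exp.2 h) ha
    have h2 : (1:ℝ) ≤ Real.exp b := Real.one_le_exp hb
    have h3 : 0 ≤ (b - a) * (Real.exp b - 1) :=
      mul_nonneg (by linarith) (by linarith)
    rw [abs_of_nonneg (by linarith), abs_of_nonneg (by nlinarith)]
    nlinarith
  · have h1 : b * Real.exp b ≤ b * Real.exp a :=
      mul_le_mul_of_nonneg_left (Real.exp_le_exp.2 h) hb
    have h2 : (1:ℝ) ≤ Real.exp a := Real.one_le_exp ha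
    have h3 : 0 ≤ (a - b) * (Real.exp a - 1) :=
      mul_nonneg (by linarith) (by linarith)
    rw [abs_of_nonpos (by linarith), abs_of_nonpos (by nlinarith)]
    nlinarith

set_option maxHeartbeats 1600000 in
/-- Asymptotics of the cone constant: with `p(σ)` the unique solution in `(σ/(4−σ), ∞)` of
`e^x = √(16−σ²)/√(16x² − σ²(x+1)²)` and `L(σ) = σ(1+p(σ))e^{p(σ)}/√(16−σ²)`, we have
`L(σ)/σ → (1/4)(1 + 1/W(1))` as `σ → 0⁺`, where `W(1)` is the unique positive root of
`ω·e^ω = 1`. -/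
theorem L_sigma_asymptotics
    (p : ℝ → ℝ)
    (hp : ∀ σ ∈ Ioo (0 : ℝ) 4, p σ ∈ Ioi (σ / (4 - σ)) ∧
      Real.exp (p σ) =
        Real.sqrt (16 - σ ^ 2) / Real.sqrt (16 * (p σ) ^ 2 - σ ^ 2 * (p σ + 1) ^ 2))
    (ω : ℝ) (hω_pos : 0 < ω) (hω : ω * Real.exp ω = 1) :
    Tendsto (fun σ : ℝ =>
        (σ * (1 + p σ) * Real.exp (p σ) / Real.sqrt (16 - σ ^ 2)) / σ)
      (nhdsWithin 0 (Ioi (0 : ℝ))) (nhds (1 / 4 * (1 + 1 / ω))) := by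
  set l := nhdsWithin (0:ℝ) (Ioi 0) with hl
  have hmem : Ioo (0:ℝ) (1/2) ∈ l :=
    Ioo_mem_nhdsGT_of_mem (by constructor <;> norm_num)
  set g : ℝ → ℝ := fun σ => p σ * Real.exp (p σ) with hgdef
  have key : ∀ σ ∈ Ioo (0:ℝ) (1/2),
      0 < p σ ∧ 16 - σ^2 ≤ 16 * (g σ)^2 ∧ (g σ)^2 * (16 - 25*σ^2) ≤ 16 := by
    intro σ hσ
    obtain ⟨hσ0, hσh⟩ := hσ
    have hσ4 : σ ∈ Ioo (0:ℝ) 4 := ⟨hσ0, by linarith⟩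
    obtain ⟨hx1, hx2⟩ := hp σ hσ4
    set x := p σ with hxdef
    have hden : 0 < 4 - σ := by linarith
    have hx0 : 0 < x := lt_trans (div_pos hσ0 hden) hx1
    have hx1' : σ / (4 - σ) < x := hx1
    have h4x : σ * (x + 1) < 4 * x := by
      rw [div_lt_iff₀ hden] at hx1'
      nlinarith
    have hD : 0 < 16 * x^2 - σ^2 * (x + 1)^2 := by
      nlinarith [mul_pos hσ0 (by linarith : (0:ℝ) < x + 1)]
    have hA : 0 < 16 - σ^2 := by nlinarith
    have h := hx2
    rw [eq_div_iff (Real.sqrt_ne_zero'.mpr hD)] at h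
    have hE : (Real.exp x)^2 * (16 * x^2 - σ^2 * (x + 1)^2) = 16 - σ^2 := by
      have h2 := congrArg (· ^ 2) h
      simp only [mul_pow] at h2
      rw [Real.sq_sqrt hD.le, Real.sq_sqrt hA.le] at h2
      linarith
    have hgD : (x * Real.exp x)^2 * (16 * x^2 - σ^2 * (x + 1)^2)
        = x^2 * (16 - σ^2) := by
      rw [mul_pow, mul_assoc, hE]
    have hlow : 16 - σ^2 ≤ 16 * (x * Real.exp x)^2 := by
      nlinarith [mul_nonneg (sq_nonneg (x * Real.exp x))
        (mul_nonneg (sq_nonneg σ) (sq_nonneg (x + 1))), mul_pos hx0 hx0]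
    refine ⟨hx0, hlow, ?_⟩
    -- x ≥ 1/4
    have hx14 : (1:ℝ)/4 ≤ x := by
      by_contra hlt
      push_neg at hlt
      have hexp : Real.exp x < 2.7182818286 :=
        lt_of_le_of_lt (Real.exp_le_exp.2 (by linarith)) Real.exp_one_lt_d9
      have hgle : x * Real.exp x < 0.7 := by nlinarith [Real.exp_pos x]
      nlinarith [mul_pos hx0 (Real.exp_pos x)]
    have h25 : (x + 1)^2 ≤ 25 * x^2 := by nlinarith
    have hG0 : (0:ℝ) ≤ (x * Real.exp x)^2 := sq_nonneg _
    have h1 : σ^2 * (x + 1)^2 ≤ 25 * σ^2 * x^2 := by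
      nlinarith [mul_le_mul_of_nonneg_left h25 (sq_nonneg σ)]
    have h2 : (x * Real.exp x)^2 * (16 * x^2 - 25 * σ^2 * x^2)
        ≤ (x * Real.exp x)^2 * (16 * x^2 - σ^2 * (x + 1)^2) :=
      mul_le_mul_of_nonneg_left (by linarith) hG0
    have h3 : x^2 * (16 - σ^2) ≤ 16 * x^2 := by
      nlinarith [mul_nonneg (sq_nonneg x) (sq_nonneg σ), sq_nonneg x, sq_nonneg σ]
    have h4 : x^2 * ((x * Real.exp x)^2 * (16 - 25 * σ^2)) ≤ x^2 * 16 := by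
      nlinarith [h2, h3, hgD]
    exact le_of_mul_le_mul_left h4 (pow_pos hx0 2)
  -- squeeze g² → 1
  have hg2 : Tendsto (fun σ => (g σ)^2) l (nhds 1) := by
    have hlowT : Tendsto (fun σ : ℝ => (16 - σ^2)/16) l (nhds 1) := by
      have : Tendsto (fun σ : ℝ => (16 - σ^2)/16) (nhds 0)
          (nhds ((16 - (0:ℝ)^2)/16)) := by
        exact ((continuous_const.sub (continuous_pow 2)).div_const 16).tendsto 0
      have := this.mono_left (nhdsWithin_le_nhds (s := Ioi (0:ℝ)))
      norm_num at this
      exact this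
    have hupT : Tendsto (fun σ : ℝ => 16/(16 - 25*σ^2)) l (nhds 1) := by
      have : ContinuousAt (fun σ : ℝ => 16/(16 - 25*σ^2)) 0 := by
        apply ContinuousAt.div continuousAt_const (by fun_prop)
        norm_num
      have h2 := this.tendsto.mono_left (nhdsWithin_le_nhds (s := Ioi (0:ℝ)))
      norm_num at h2
      exact h2
    refine tendsto_of_tendsto_of_tendsto_of_le_of_le' hlowT hupT ?_ ?_
    · filter_upwards [hmem] with σ hσ
      obtain ⟨_, h1, _⟩ := key σ hσ
      linarith
    · filter_upwards [hmem] with σ hσ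
      obtain ⟨_, _, h2⟩ := key σ hσ
      have hσ2 : 0 < 16 - 25*σ^2 := by
        obtain ⟨a, b⟩ := hσ; nlinarith
      rw [le_div_iff₀ hσ2]
      linarith
  have hgto : Tendsto g l (nhds 1) := by
    have hs : Tendsto (fun σ => Real.sqrt ((g σ)^2)) l (nhds 1) := by
      have := (Real.continuous_sqrt.tendsto 1).comp hg2
      simpa [Function.comp_def] using this
    have heq : (fun σ => Real.sqrt ((g σ)^2)) =ᶠ[l] g := by
      filter_upwards [hmem] with σ hσ
      obtain ⟨h0, _, _⟩ := key σ hσ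
      exact Real.sqrt_sq (le_of_lt (mul_pos h0 (Real.exp_pos _)))
    exact Filter.Tendsto.congr' heq hs
  have hdist : Tendsto (fun σ => |g σ - 1|) l (nhds 0) := by
    have h1 := hgto.sub (tendsto_const_nhds (x := (1:ℝ)))
    norm_num at h1
    simpa using h1.abs
  have hpω : Tendsto p l (nhds ω) := by
    rw [tendsto_iff_dist_tendsto_zero]
    simp only [Real.dist_eq]
    refine squeeze_zero' ?_ ?_ hdist
    · filter_upwards with σ; exact abs_nonneg _
    · filter_upwards [hmem] with σ hσ
      obtain ⟨h0, _, _⟩ := key σ hσ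
      have := aux_mono_xexp hω_pos.le h0.le
      rw [hω] at this
      simpa using this
  have hsq16 : Real.sqrt 16 = 4 := by
    rw [show (16:ℝ) = 4^2 by norm_num, Real.sqrt_sq (by norm_num)]
  have hsqT : Tendsto (fun σ : ℝ => Real.sqrt (16 - σ^2)) l (nhds 4) := by
    have : Tendsto (fun σ : ℝ => Real.sqrt (16 - σ^2)) (nhds 0)
        (nhds (Real.sqrt (16 - (0:ℝ)^2))) :=
      (Real.continuous_sqrt.comp (continuous_const.sub (continuous_pow 2))).tendsto 0
    have h2 := this.mono_left (nhdsWithin_le_nhds (s := Ioi (0:ℝ)))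
    norm_num [hsq16] at h2
    exact h2
  have hexpω : Real.exp ω = 1/ω := by
    rw [eq_div_iff hω_pos.ne', mul_comm]; exact hω
  have hF : Tendsto (fun σ => (1 + p σ) * Real.exp (p σ) / Real.sqrt (16 - σ^2)) l
      (nhds ((1 + ω) * Real.exp ω / 4)) :=
    (((tendsto_const_nhds (x := (1:ℝ))).add hpω).mul
      ((Real.continuous_exp.tendsto ω).comp hpω)).div hsqT (by norm_num)
  have hval : (1 + ω) * Real.exp ω / 4 = 1/4 * (1 + 1/ω) := by
    rw [hexpω]; field_simp; ring
  rw [← hval]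
  have heq2 : (fun σ => (1 + p σ) * Real.exp (p σ) / Real.sqrt (16 - σ^2)) =ᶠ[l]
      (fun σ : ℝ =>
        (σ * (1 + p σ) * Real.exp (p σ) / Real.sqrt (16 - σ ^ 2)) / σ) := by
    filter_upwards [self_mem_nhdsWithin] with σ hσ
    have hσ0 : σ ≠ 0 := ne_of_gt hσ
    rw [eq_div_iff hσ0]
    ring
  exact Filter.Tendsto.congr' heq2 hF
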